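/- arXiv:1001.4464 — 2 statements merged into one kernel-verified Lean document; each statement's English description precedes it below -/
import Mathlib

section
/- Let n ≥ 1, let s satisfy 2 ≤ s ≤ n, fix a_1,…,a_s ∈ ℝ, and let c ∈ ℝⁿ. Then for every z ∈ H_s(a_1,…,a_s) there exists z′ ∈ H_s(a_1,…,a_s) such that the polynomial f_{z′} has at most s distinct roots and c·z′ ≤ c·z; consequently the minimum of the linear function z ↦ c·z over H_s(a_1,…,a_s) equals its minimum over the subset of points z whose polynomial f_z has at most s distinct roots. -/
open Polynomial

/-- The monic polynomial `t^n − z_1 t^{n−1} + z_2 t^{n−2} − ⋯ + (−1)^n z_n` associated to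
`z ∈ ℝⁿ` (the coordinate `z i` playing the role of `z_{i+1}` for `i : Fin n`). -/
noncomputable def polyOfCoeffs (n : ℕ) (z : Fin n → ℝ) : Polynomial ℝ :=
  Polynomial.X ^ n +
    ∑ i : Fin n, Polynomial.C ((-1) ^ ((i : ℕ) + 1) * z i) * Polynomial.X ^ (n - ((i : ℕ) + 1))

namespace HsAux


noncomputable def toZ (n : ℕ) (g : Polynomial ℝ) : Fin n → ℝ :=
  fun i => (-1) ^ ((i : ℕ) + 1) * g.coeff (n - ((i : ℕ) + 1))

lemma neg_one_pow_cancel (k : ℕ) (x : ℝ) : (-1 : ℝ) ^ k * ((-1) ^ k * x) = x := by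
  rw [← mul_assoc, ← pow_add, ← two_mul, pow_mul]
  norm_num

lemma polyOfCoeffs_coeff_lt (n : ℕ) (z : Fin n → ℝ) {m : ℕ} (hm : m < n) :
    (polyOfCoeffs n z).coeff m = (-1) ^ (n - m) * z ⟨n - 1 - m, by omega⟩ := by
  unfold polyOfCoeffs
  rw [coeff_add, coeff_X_pow, if_neg (by omega), finset_sum_coeff]
  rw [Finset.sum_eq_single (⟨n - 1 - m, by omega⟩ : Fin n)]
  · simp only [coeff_C_mul, coeff_X_pow]
    rw [if_pos (by omega)]
    have : n - 1 - m + 1 = n - m := by omega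
    rw [this]; ring
  · intro b _ hb
    simp only [coeff_C_mul, coeff_X_pow]
    rw [if_neg]
    · ring
    · intro h
      apply hb
      have hb1 : (b : ℕ) < n := b.isLt
      have : (b : ℕ) = n - 1 - m := by omega
      exact Fin.ext this
  · intro h; exact absurd (Finset.mem_univ _) h

lemma polyOfCoeffs_coeff (n : ℕ) (z : Fin n → ℝ) (i : Fin n) :
    (polyOfCoeffs n z).coeff (n - ((i : ℕ) + 1)) = (-1) ^ ((i : ℕ) + 1) * z i := by
  have hi : (i : ℕ) < n := i.isLt
  rw [polyOfCoeffs_coeff_lt n z (by omega)]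
  have h1 : n - (n - ((i : ℕ) + 1)) = (i : ℕ) + 1 := by omega
  have h2 : n - 1 - (n - ((i : ℕ) + 1)) = (i : ℕ) := by omega
  rw [h1]
  have h3 : (⟨n - 1 - (n - ((i : ℕ) + 1)), by omega⟩ : Fin n) = i := by
    apply Fin.ext; exact h2
  rw [h3]

lemma polyOfCoeffs_coeff_n (n : ℕ) (z : Fin n → ℝ) : (polyOfCoeffs n z).coeff n = 1 := by
  unfold polyOfCoeffs
  rw [coeff_add, coeff_X_pow, if_pos rfl, finset_sum_coeff]
  rw [Finset.sum_eq_zero]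
  · simp
  · intro b _
    simp only [coeff_C_mul, coeff_X_pow]
    rw [if_neg (by omega)]
    ring

lemma polyOfCoeffs_natDegree (n : ℕ) (z : Fin n → ℝ) : (polyOfCoeffs n z).natDegree = n := by
  have hle : (polyOfCoeffs n z).natDegree ≤ n := by
    unfold polyOfCoeffs
    apply natDegree_add_le_of_degree_le
    · exact natDegree_X_pow_le n
    · apply Polynomial.natDegree_sum_le_of_forall_le
      intro i _
      refine le_trans (natDegree_C_mul_le _ _) ?_
      refine le_trans (natDegree_X_pow_le _) (by omega)
  have hne : (polyOfCoeffs n z).coeff n ≠ 0 := by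
    rw [polyOfCoeffs_coeff_n]; norm_num
  exact le_antisymm hle (le_natDegree_of_ne_zero hne)

lemma polyOfCoeffs_monic (n : ℕ) (z : Fin n → ℝ) : (polyOfCoeffs n z).Monic := by
  unfold Monic leadingCoeff
  rw [polyOfCoeffs_natDegree, polyOfCoeffs_coeff_n]

lemma toZ_polyOfCoeffs (n : ℕ) (z : Fin n → ℝ) : toZ n (polyOfCoeffs n z) = z := by
  funext i
  unfold toZ
  rw [polyOfCoeffs_coeff n z i, neg_one_pow_cancel]

lemma polyOfCoeffs_toZ (n : ℕ) {g : Polynomial ℝ} (hm : g.Monic) (hd : g.natDegree = n) :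
    polyOfCoeffs n (toZ n g) = g := by
  ext m
  rcases lt_trichotomy m n with hlt | heq | hgt
  · rw [polyOfCoeffs_coeff_lt n _ hlt]
    unfold toZ
    have h1 : n - 1 - m + 1 = n - m := by omega
    have h2 : n - (n - m) = m := by omega
    simp only [h1, h2]
    rw [neg_one_pow_cancel]
  · subst heq
    rw [polyOfCoeffs_coeff_n]
    have := hm
    unfold Monic leadingCoeff at this
    rw [hd] at this
    exact this.symm
  · rw [coeff_eq_zero_of_natDegree_lt (by rw [polyOfCoeffs_natDegree]; omega),
      coeff_eq_zero_of_natDegree_lt (by omega)]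



noncomputable def prodXC (M : Multiset ℝ) : Polynomial ℝ :=
  (M.map (fun t => X - C t)).prod

lemma prodXC_monic (M : Multiset ℝ) : (prodXC M).Monic :=
  monic_multiset_prod_of_monic M _ (fun t _ => monic_X_sub_C t)

lemma prodXC_natDegree (M : Multiset ℝ) : (prodXC M).natDegree = Multiset.card M :=
  natDegree_multiset_prod_X_sub_C_eq_card M

lemma prodXC_roots (M : Multiset ℝ) : (prodXC M).roots = M :=
  roots_multiset_prod_X_sub_C M

lemma prodXC_splits (M : Multiset ℝ) : (prodXC M).Splits := by
  rw [splits_iff_card_roots, prodXC_roots, prodXC_natDegree]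

lemma prodXC_add (M N : Multiset ℝ) : prodXC (M + N) = prodXC M * prodXC N := by
  unfold prodXC
  rw [Multiset.map_add, Multiset.prod_add]

lemma prodXC_map_univ {n : ℕ} (ρ : Fin n → ℝ) :
    prodXC (Multiset.map ρ Finset.univ.val) = ∏ i, (X - C (ρ i)) := by
  unfold prodXC
  rw [Multiset.map_map, Finset.prod_eq_multiset_prod]
  rfl

lemma exists_rootvec {n : ℕ} {g : Polynomial ℝ} (hm : g.Monic) (hd : g.natDegree = n)
    (hs : g.Splits) :
    ∃ ρ : Fin n → ℝ, g = ∏ i, (X - C (ρ i)) := by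
  have hcard : Multiset.card g.roots = n := by
    rw [splits_iff_card_roots.1 hs, hd]
  set L := g.roots.toList with hLdef
  have hLM : (L : Multiset ℝ) = g.roots := Multiset.coe_toList _
  have hL : L.length = n := by
    rw [← hcard, ← hLM]; rfl
  refine ⟨fun i => L.get (Fin.cast hL.symm i), ?_⟩
  have h1 : g = prodXC g.roots := hs.eq_prod_roots_of_monic hm
  rw [h1, ← hLM]
  unfold prodXC
  rw [Multiset.map_coe, Multiset.prod_coe]
  have h2 : (∏ i : Fin n, (X - C (L.get (Fin.cast hL.symm i)))) =
      ∏ j : Fin L.length, (X - C (L.get j)) := Fin.prod_congr' (fun j => X - C (L.get j)) hL.symm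
  rw [h2, ← List.prod_ofFn]
  congr 1
  conv_lhs => rw [← List.ofFn_get L]
  rw [List.map_ofFn]
  rfl



lemma prodXC_cons (a : ℝ) (M : Multiset ℝ) : prodXC (a ::ₘ M) = (X - C a) * prodXC M := by
  unfold prodXC
  rw [Multiset.map_cons, Multiset.prod_cons]

lemma coeff_X_sub_C_mul (r : ℝ) (P : Polynomial ℝ) (m : ℕ) :
    ((X - C r) * P).coeff m = (if m = 0 then 0 else P.coeff (m - 1)) - r * P.coeff m := by
  rw [sub_mul, coeff_sub, coeff_C_mul]
  congr 1
  match m with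
  | 0 => simp [mul_coeff_zero]
  | Nat.succ k => rw [coeff_X_mul]; simp

lemma prodXC_coeff_sub_one (M : Multiset ℝ) (h : 1 ≤ Multiset.card M) :
    (prodXC M).coeff (Multiset.card M - 1) = -M.sum := by
  induction M using Multiset.induction_on with
  | empty => simp at h
  | cons a M ih =>
    rw [prodXC_cons, Multiset.card_cons]
    have hd : Multiset.card M + 1 - 1 = Multiset.card M := by omega
    rw [hd, coeff_X_sub_C_mul]
    by_cases h0 : Multiset.card M = 0
    · have : M = 0 := Multiset.card_eq_zero.1 h0
      subst this
      simp [prodXC]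
    · rw [if_neg h0, ih (by omega)]
      have : (prodXC M).coeff (Multiset.card M) = 1 := by
        have := (prodXC_monic M).coeff_natDegree
        rwa [prodXC_natDegree] at this
      rw [this, Multiset.sum_cons]
      ring

lemma prodXC_coeff_sub_two (M : Multiset ℝ) (h : 2 ≤ Multiset.card M) :
    2 * (prodXC M).coeff (Multiset.card M - 2) =
      M.sum ^ 2 - (M.map (fun x => x ^ 2)).sum := by
  induction M using Multiset.induction_on with
  | empty => simp at h
  | cons a M ih =>
    rw [prodXC_cons, Multiset.card_cons]
    have hd1 : 1 ≤ Multiset.card M := by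
      rw [Multiset.card_cons] at h; omega
    rw [Multiset.sum_cons, Multiset.map_cons, Multiset.sum_cons]
    by_cases h1 : Multiset.card M = 1
    · obtain ⟨b, rfl⟩ := Multiset.card_eq_one.1 h1
      have : (1 : ℕ) + 1 - 2 = 0 := rfl
      rw [h1, this, coeff_X_sub_C_mul, if_pos rfl]
      have hc : (prodXC {b}).coeff 0 = -b := by
        have := prodXC_coeff_sub_one {b} (by simp)
        simpa using this
      rw [hc]
      simp
      ring
    · have h2 : 2 ≤ Multiset.card M := by omega
      have hd : Multiset.card M + 1 - 2 = Multiset.card M - 1 := by omega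
      rw [hd, coeff_X_sub_C_mul, if_neg (by omega)]
      have hdd : Multiset.card M - 1 - 1 = Multiset.card M - 2 := by omega
      rw [hdd, prodXC_coeff_sub_one M hd1]
      rw [mul_sub]
      rw [ih h2]
      ring

lemma continuous_coeff_prod {ι : Type*} [DecidableEq ι] (t : Finset ι) :
    ∀ m : ℕ, Continuous fun ρ : ι → ℝ => (∏ i ∈ t, (X - C (ρ i))).coeff m := by
  induction t using Finset.induction_on with
  | empty =>
    intro m
    simp only [Finset.prod_empty]
    exact continuous_const
  | insert _ _ ha ih =>
    rename_i a t'
    intro m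
    have heq : (fun ρ : ι → ℝ => (∏ i ∈ insert a t', (X - C (ρ i))).coeff m)
        = fun ρ : ι → ℝ => (if m = 0 then 0 else (∏ i ∈ t', (X - C (ρ i))).coeff (m - 1))
            - ρ a * (∏ i ∈ t', (X - C (ρ i))).coeff m := by
      funext ρ
      rw [Finset.prod_insert ha, coeff_X_sub_C_mul]
    rw [heq]
    apply Continuous.sub
    · by_cases h0 : m = 0
      · simp only [h0, if_pos rfl]; exact continuous_const
      · simp only [if_neg h0]; exact ih (m - 1)
    · exact ((continuous_apply a).mul (ih m))



lemma exists_lexmin {X : Type*} [TopologicalSpace X] :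
    ∀ (m : ℕ) (F : Fin m → X → ℝ), (∀ j, Continuous (F j)) →
    ∀ (A : Set X), IsCompact A → A.Nonempty →
    ∃ x ∈ A, ∀ y ∈ A,
      ¬ (∃ j : Fin m, (∀ j' : Fin m, j' < j → F j' y = F j' x) ∧ F j y < F j x) := by
  intro m
  induction m with
  | zero =>
    intro F _ A _ hne
    obtain ⟨x, hx⟩ := hne
    exact ⟨x, hx, fun y _ h => (h.choose).elim0⟩
  | succ m ih =>
    intro F hF A hA hne
    obtain ⟨x0, hx0, hmin⟩ := hA.exists_isMinOn hne (hF 0).continuousOn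
    rw [isMinOn_iff] at hmin
    set A' : Set X := {x ∈ A | F 0 x = F 0 x0} with hA'def
    have hA'c : IsCompact A' := by
      have : A' = A ∩ (F 0) ⁻¹' {F 0 x0} := by
        ext x; simp [hA'def, Set.mem_preimage]
      rw [this]
      exact hA.inter_right (IsClosed.preimage (hF 0) isClosed_singleton)
    have hA'ne : A'.Nonempty := ⟨x0, hx0, rfl⟩
    obtain ⟨x, hxA', hx⟩ := ih (Fin.tail F) (fun j => hF j.succ) A' hA'c hA'ne
    refine ⟨x, hxA'.1, ?_⟩
    rintro y hy ⟨j, hpre, hlt⟩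
    rcases Fin.eq_zero_or_eq_succ j with rfl | ⟨j', rfl⟩
    · have h1 : F 0 x0 ≤ F 0 y := hmin y hy
      have h2 : F 0 x = F 0 x0 := hxA'.2
      rw [h2] at hlt
      exact absurd h1 (not_le.2 hlt)
    · have hy0 : F 0 y = F 0 x0 := by
        have h1 := hpre 0 (Fin.succ_pos j')
        rw [h1, hxA'.2]
      have hyA' : y ∈ A' := ⟨hy, hy0⟩
      refine hx y hyA' ⟨j', fun j'' hj'' => ?_, hlt⟩
      exact hpre j''.succ (by simpa [Fin.succ_lt_succ_iff] using hj'')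



lemma same_sign_mul {x y x' y' : ℝ} (hx : |x' - x| < |x|) (hy : |y' - y| < |y|)
    (hxy : x * y < 0) : x' * y' < 0 := by
  rw [abs_lt] at hx hy
  rcases lt_trichotomy x 0 with hxs | hxs | hxs
  · have hx' : x' < 0 := by
      rcases abs_cases x with ⟨h1, h2⟩ | ⟨h1, h2⟩ <;> linarith [hx.1, hx.2]
    have hys : 0 < y := by nlinarith
    have hy' : 0 < y' := by
      rcases abs_cases y with ⟨h1, h2⟩ | ⟨h1, h2⟩ <;> linarith [hy.1, hy.2]
    exact mul_neg_of_neg_of_pos hx' hy'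
  · subst hxs; simp at hxy
  · have hx' : 0 < x' := by
      rcases abs_cases x with ⟨h1, h2⟩ | ⟨h1, h2⟩ <;> linarith [hx.1, hx.2]
    have hys : y < 0 := by nlinarith
    have hy' : y' < 0 := by
      rcases abs_cases y with ⟨h1, h2⟩ | ⟨h1, h2⟩ <;> linarith [hy.1, hy.2]
    exact mul_neg_of_pos_of_neg hx' hy'

lemma perturb_splits_aux {m : ℕ} (hm : 1 ≤ m) (t : Fin m → ℝ) (ht : StrictMono t) :
    ∃ ε > 0, ∀ lam : ℝ, |lam| < ε →
      ((∏ i, (X - C (t i))) + C lam).Splits := by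
  set r : Polynomial ℝ := ∏ i, (X - C (t i)) with hrdef
  have hrmonic : r.Monic := monic_prod_of_monic _ _ (fun i _ => monic_X_sub_C (t i))
  have hrdeg : r.natDegree = m := by
    rw [hrdef, natDegree_prod_of_monic _ _ (fun i _ => monic_X_sub_C (t i))]
    simp [natDegree_X_sub_C]
  have hreval : ∀ x : ℝ, r.eval x = ∏ i, (x - t i) := by
    intro x; rw [hrdef, eval_prod]; simp
  -- test points
  have h0m : 0 < m := hm
  set u : Fin (m + 1) → ℝ := fun j =>
    if h0 : (j : ℕ) = 0 then t ⟨0, h0m⟩ - 1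
    else if hmm : (j : ℕ) = m then t ⟨m - 1, by omega⟩ + 1
    else (t ⟨(j : ℕ) - 1, by omega⟩ + t ⟨(j : ℕ), by omega⟩) / 2 with hudef
  have tmono : Monotone t := ht.monotone
  have P1 : ∀ (i : Fin m) (j : Fin (m + 1)), (j : ℕ) ≤ (i : ℕ) → u j < t i := by
    intro i j hji
    by_cases h0 : (j : ℕ) = 0
    · have : u j = t ⟨0, h0m⟩ - 1 := by rw [hudef]; simp [h0]
      rw [this]
      have : t ⟨0, h0m⟩ ≤ t i := tmono (by simp [Fin.le_def])
      linarith
    · have hjm : (j : ℕ) ≠ m := by have := i.isLt; omega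
      have : u j = (t ⟨(j : ℕ) - 1, by have := j.isLt; omega⟩ + t ⟨(j : ℕ), by have := i.isLt; omega⟩) / 2 := by
        rw [hudef]; simp [h0, hjm]
      rw [this]
      have h1 : t ⟨(j : ℕ) - 1, by have := j.isLt; omega⟩ < t ⟨(j : ℕ), by have := i.isLt; omega⟩ := by
        apply ht; show (j : ℕ) - 1 < (j : ℕ); omega
      have h2 : t ⟨(j : ℕ), by have := i.isLt; omega⟩ ≤ t i := tmono (by simp [Fin.le_def]; omega)
      linarith
  have P2 : ∀ (i : Fin m) (j : Fin (m + 1)), (i : ℕ) < (j : ℕ) → t i < u j := by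
    intro i j hij
    by_cases hjm : (j : ℕ) = m
    · have : u j = t ⟨m - 1, by omega⟩ + 1 := by
        rw [hudef]; simp [hjm]; omega
      rw [this]
      have : t i ≤ t ⟨m - 1, by omega⟩ := tmono (by simp [Fin.le_def]; omega)
      linarith
    · have h0 : (j : ℕ) ≠ 0 := by omega
      have : u j = (t ⟨(j : ℕ) - 1, by have := j.isLt; omega⟩ + t ⟨(j : ℕ), by have := j.isLt; omega⟩) / 2 := by
        rw [hudef]; simp [h0, hjm]
      rw [this]
      have h1 : t ⟨(j : ℕ) - 1, by have := j.isLt; omega⟩ < t ⟨(j : ℕ), by have := j.isLt; omega⟩ := by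
        apply ht; show (j : ℕ) - 1 < (j : ℕ); omega
      have h2 : t i ≤ t ⟨(j : ℕ) - 1, by have := j.isLt; omega⟩ := tmono (by simp [Fin.le_def]; omega)
      linarith
  have humono : ∀ (j j' : Fin (m + 1)), (j : ℕ) < (j' : ℕ) → u j < u j' := by
    intro j j' hjj'
    have hj : (j : ℕ) < m := by have := j'.isLt; omega
    have h1 : u j < t ⟨(j : ℕ), hj⟩ := P1 _ _ le_rfl
    have h2 : t ⟨(j : ℕ), hj⟩ < u j' := P2 _ _ (by simpa using hjj')
    linarith
  -- r does not vanish at test points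
  have huroot : ∀ j : Fin (m + 1), r.eval (u j) ≠ 0 := by
    intro j
    rw [hreval]
    apply Finset.prod_ne_zero_iff.2
    intro i _
    rcases le_or_gt (j : ℕ) (i : ℕ) with h | h
    · exact ne_of_lt (by have := P1 i j h; linarith)
    · exact ne_of_gt (by have := P2 i j h; linarith)
  -- opposite signs at consecutive test points
  have hsign : ∀ j : Fin m, r.eval (u j.castSucc) * r.eval (u j.succ) < 0 := by
    intro j
    rw [hreval, hreval, ← Finset.prod_mul_distrib]
    have hneg : (u j.castSucc - t j) * (u j.succ - t j) < 0 := by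
      have h1 : u j.castSucc < t j := P1 j j.castSucc (by simp)
      have h2 : t j < u j.succ := P2 j j.succ (by simp)
      apply mul_neg_of_neg_of_pos <;> linarith
    rw [← Finset.mul_prod_erase Finset.univ _ (Finset.mem_univ j)]
    apply mul_neg_of_neg_of_pos hneg
    apply Finset.prod_pos
    intro i hi
    have hij : i ≠ j := (Finset.mem_erase.1 hi).1
    rcases lt_or_gt_of_ne hij with h | h
    · have hji : (i : ℕ) < (j : ℕ) := h
      have h1 : t i < u j.castSucc := P2 i j.castSucc (by simp only [Fin.coe_castSucc]; omega)
      have h2 : t i < u j.succ := P2 i j.succ (by simp only [Fin.val_succ]; omega)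
      nlinarith
    · have hji : (j : ℕ) < (i : ℕ) := h
      have h1 : u j.castSucc < t i := P1 i j.castSucc (by simp only [Fin.coe_castSucc]; omega)
      have h2 : u j.succ < t i := P1 i j.succ (by simp only [Fin.val_succ]; omega)
      nlinarith
  -- epsilon
  set ε : ℝ := Finset.min' (Finset.image (fun j => |r.eval (u j)|) Finset.univ)
    (by simp) with hεdef
  have hεpos : 0 < ε := by
    rw [hεdef, Finset.lt_min'_iff]
    intro y hy
    obtain ⟨j, _, rfl⟩ := Finset.mem_image.1 hy
    exact abs_pos.2 (huroot j)
  have hεle : ∀ j : Fin (m + 1), ε ≤ |r.eval (u j)| := by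
    intro j
    apply Finset.min'_le
    exact Finset.mem_image.2 ⟨j, Finset.mem_univ j, rfl⟩
  refine ⟨ε, hεpos, ?_⟩
  intro lam hlam
  set h : Polynomial ℝ := r + C lam with hhdef
  have hheval : ∀ x : ℝ, h.eval x = r.eval x + lam := by intro x; simp [hhdef]
  have hrdegree : r.degree = (m : WithBot ℕ) := by
    rw [degree_eq_natDegree hrmonic.ne_zero, hrdeg]
  have hhdeglt : (C lam).degree < r.degree := by
    apply lt_of_le_of_lt degree_C_le
    rw [hrdegree]
    exact_mod_cast Nat.cast_pos.2 h0m
  have hhmonic : h.Monic := hrmonic.add_of_left hhdeglt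
  have hhdeg : h.natDegree = m := by
    have : h.degree = (m : WithBot ℕ) := by
      rw [hhdef, degree_add_eq_left_of_degree_lt hhdeglt, hrdegree]
    exact natDegree_eq_of_degree_eq_some this
  have hsign' : ∀ j : Fin m, h.eval (u j.castSucc) * h.eval (u j.succ) < 0 := by
    intro j
    apply same_sign_mul (x := r.eval (u j.castSucc)) (y := r.eval (u j.succ))
    · rw [hheval]
      simpa using lt_of_lt_of_le hlam (hεle j.castSucc)
    · rw [hheval]
      simpa using lt_of_lt_of_le hlam (hεle j.succ)
    · exact hsign j
  have huordered : ∀ j : Fin m, u j.castSucc < u j.succ := by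
    intro j
    apply humono
    simp
  have hroot : ∀ j : Fin m, ∃ x, x ∈ Set.Ioo (u j.castSucc) (u j.succ) ∧ h.eval x = 0 := by
    intro j
    have hcont : ContinuousOn (fun x => h.eval x) (Set.Icc (u j.castSucc) (u j.succ)) :=
      (Polynomial.continuous h).continuousOn
    have hprod := hsign' j
    rcases lt_trichotomy (h.eval (u j.castSucc)) 0 with hneg | hzero | hpos
    · have hposr : 0 < h.eval (u j.succ) := by nlinarith
      have h0mem : (0:ℝ) ∈ Set.Ioo (h.eval (u j.castSucc)) (h.eval (u j.succ)) := ⟨hneg, hposr⟩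
      obtain ⟨xx, hxx, hfxx⟩ := intermediate_value_Ioo (le_of_lt (huordered j)) hcont h0mem
      exact ⟨xx, hxx, hfxx⟩
    · rw [hzero] at hprod; nlinarith
    · have hnegr : h.eval (u j.succ) < 0 := by nlinarith
      have h0mem : (0:ℝ) ∈ Set.Ioo (h.eval (u j.succ)) (h.eval (u j.castSucc)) := ⟨hnegr, hpos⟩
      obtain ⟨xx, hxx, hfxx⟩ := intermediate_value_Ioo' (le_of_lt (huordered j)) hcont h0mem
      exact ⟨xx, hxx, hfxx⟩
  choose x hxmem hxroot using hroot
  have hxlt : ∀ i j : Fin m, i < j → x i < x j := by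
    intro i j hij
    have h1 : x i < u i.succ := (hxmem i).2
    have h2 : u j.castSucc < x j := (hxmem j).1
    have h3 : u i.succ ≤ u j.castSucc := by
      rcases eq_or_lt_of_le (show (i:ℕ)+1 ≤ (j:ℕ) from hij) with heq | hlt'
      · have he : i.succ = j.castSucc := Fin.ext (by simpa using heq)
        rw [he]
      · exact le_of_lt (humono _ _ (by simpa using hlt'))
    linarith
  have hxinj : Function.Injective x := by
    intro i j hij
    by_contra hne
    rcases lt_or_gt_of_ne hne with hlt2 | hlt2
    · exact absurd hij (ne_of_lt (hxlt _ _ hlt2))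
    · exact absurd hij.symm (ne_of_lt (hxlt _ _ hlt2))
  have hsub : Finset.image x Finset.univ ⊆ h.roots.toFinset := by
    intro y hy
    obtain ⟨j, _, rfl⟩ := Finset.mem_image.1 hy
    rw [Multiset.mem_toFinset, mem_roots']
    exact ⟨hhmonic.ne_zero, hxroot j⟩
  have hcard1 : m ≤ Multiset.card h.roots := by
    calc m = (Finset.image x Finset.univ).card := by
          rw [Finset.card_image_of_injective _ hxinj, Finset.card_univ, Fintype.card_fin]
      _ ≤ h.roots.toFinset.card := Finset.card_le_card hsub
      _ ≤ Multiset.card h.roots := Multiset.toFinset_card_le _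
  rw [splits_iff_card_roots]
  have hcard2 := Polynomial.card_roots' h
  omega


lemma prodXC_eq_prod_list (L : List ℝ) :
    prodXC (↑L) = ∏ i : Fin L.length, (X - C (L.get i)) := by
  unfold prodXC
  rw [Multiset.map_coe, Multiset.prod_coe, ← List.prod_ofFn]
  congr 1
  conv_lhs => rw [← List.ofFn_get L]
  rw [List.map_ofFn]
  rfl

lemma exists_strictMono_vec (D : Multiset ℝ) (hnd : D.Nodup) {k : ℕ} (hk : Multiset.card D = k) :
    ∃ t : Fin k → ℝ, StrictMono t ∧ prodXC D = ∏ i, (X - C (t i)) := by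
  set L := D.sort (· ≤ ·) with hL
  have hLD : (↑L : Multiset ℝ) = D := D.sort_eq _
  have hlen : L.length = k := by
    rw [← hk, ← hLD]
    exact (Multiset.coe_card L).symm ▸ rfl
  have hnodL : L.Nodup := by
    rw [← Multiset.coe_nodup, hLD]; exact hnd
  have hsorted : L.Pairwise (· < ·) := List.SortedLT.pairwise ((List.Pairwise.sortedLE (D.pairwise_sort (· ≤ ·))).sortedLT_of_nodup hnodL)
  refine ⟨fun i => L.get (Fin.cast hlen.symm i), ?_, ?_⟩
  · intro i j hij
    apply (List.Pairwise.sortedLT hsorted).strictMono_get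
    rw [Fin.lt_def]
    simp only [Fin.coe_cast]
    exact hij
  · rw [← hLD, prodXC_eq_prod_list]
    exact (Fin.prod_congr' (fun j => X - C (L.get j)) hlen.symm).symm

end HsAux

/-- Minimizing a linear function over `H_s(a_1,…,a_s)`: each point of `H_s` is dominated by a
point of `H_s` whose polynomial has at most `s` distinct roots; consequently the infimum of
the linear function over `H_s` equals its infimum over this subset. -/
theorem linear_min_on_Hs (n s : ℕ) (hn : 1 ≤ n) (hs2 : 2 ≤ s) (hsn : s ≤ n)
    (a : Fin n → ℝ) (c : Fin n → ℝ) :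
    (∀ z ∈ {z : Fin n → ℝ | (∀ i : Fin n, (i : ℕ) < s → z i = a i) ∧
        (polyOfCoeffs n z).Splits},
      ∃ z' ∈ {z : Fin n → ℝ | (∀ i : Fin n, (i : ℕ) < s → z i = a i) ∧
          (polyOfCoeffs n z).Splits},
        (polyOfCoeffs n z').roots.toFinset.card ≤ s ∧
        ∑ i, c i * z' i ≤ ∑ i, c i * z i) ∧
    sInf ((fun z : Fin n → ℝ => ∑ i, c i * z i) ''
        {z : Fin n → ℝ | (∀ i : Fin n, (i : ℕ) < s → z i = a i) ∧
          (polyOfCoeffs n z).Splits}) =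
      sInf ((fun z : Fin n → ℝ => ∑ i, c i * z i) ''
        {z : Fin n → ℝ | ((∀ i : Fin n, (i : ℕ) < s → z i = a i) ∧
            (polyOfCoeffs n z).Splits) ∧
          (polyOfCoeffs n z).roots.toFinset.card ≤ s}) := by
  classical
  have hn2 : 2 ≤ n := hs2.trans hsn
  set φ : (Fin n → ℝ) → ℝ := fun z => ∑ i, c i * z i with hφdef
  set S : Set (Fin n → ℝ) := {z : Fin n → ℝ | (∀ i : Fin n, (i : ℕ) < s → z i = a i) ∧
      (polyOfCoeffs n z).Splits} with hSdef
  have hprodmonic : ∀ ρ : Fin n → ℝ, (∏ i, (X - C (ρ i))).Monic := fun ρ =>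
    monic_prod_of_monic _ _ fun i _ => monic_X_sub_C (ρ i)
  have hproddeg : ∀ ρ : Fin n → ℝ, (∏ i, (X - C (ρ i))).natDegree = n := by
    intro ρ
    rw [natDegree_prod_of_monic _ _ fun i _ => monic_X_sub_C (ρ i)]
    simp [natDegree_X_sub_C]
  set E : (Fin n → ℝ) → (Fin n → ℝ) := fun ρ => HsAux.toZ n (∏ i, (X - C (ρ i))) with hEdef
  have hPE : ∀ ρ, polyOfCoeffs n (E ρ) = ∏ i, (X - C (ρ i)) := fun ρ =>
    HsAux.polyOfCoeffs_toZ n (hprodmonic ρ) (hproddeg ρ)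
  have hEcont : ∀ i : Fin n, Continuous fun ρ => E ρ i := by
    intro i
    exact continuous_const.mul (HsAux.continuous_coeff_prod Finset.univ _)
  have hφc : Continuous φ := by
    apply continuous_finset_sum
    intro i _
    exact continuous_const.mul (continuous_apply i)
  have hφcont : Continuous fun ρ => φ (E ρ) := by
    apply continuous_finset_sum
    intro i _
    exact continuous_const.mul (hEcont i)
  set K : Set (Fin n → ℝ) := {ρ : Fin n → ℝ | ∀ i : Fin n, (i : ℕ) < s → E ρ i = a i}
    with hKdef
  have hEK : ∀ ρ ∈ K, E ρ ∈ S := by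
    intro ρ hρ
    refine ⟨hρ, ?_⟩
    rw [hPE]
    exact Splits.prod fun i _ => Splits.X_sub_C _
  have hSK : ∀ z ∈ S, ∃ ρ ∈ K, E ρ = z := by
    intro z hz
    obtain ⟨ρ, hρ⟩ := HsAux.exists_rootvec (HsAux.polyOfCoeffs_monic n z)
      (HsAux.polyOfCoeffs_natDegree n z) hz.2
    have hEz : E ρ = z := by
      show HsAux.toZ n (∏ i, (X - C (ρ i))) = z
      rw [← hρ, HsAux.toZ_polyOfCoeffs]
    exact ⟨ρ, fun i hi => by rw [hEz]; exact hz.1 i hi, hEz⟩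
  -- sum and sum-of-squares identities
  have hMcard : ∀ ρ : Fin n → ℝ, Multiset.card (Multiset.map ρ Finset.univ.val) = n := by
    intro ρ
    rw [Multiset.card_map]
    simp
  have hMsum : ∀ ρ : Fin n → ℝ, (Multiset.map ρ Finset.univ.val).sum = ∑ i, ρ i := by
    intro ρ
    rw [Finset.sum_eq_multiset_sum]
  have hE0 : ∀ ρ : Fin n → ℝ, E ρ ⟨0, by omega⟩ = ∑ i, ρ i := by
    intro ρ
    show (-1 : ℝ) ^ ((0 : ℕ) + 1) * (∏ i, (X - C (ρ i))).coeff (n - ((0 : ℕ) + 1)) = _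
    rw [← HsAux.prodXC_map_univ]
    have h1 : n - ((0 : ℕ) + 1) = Multiset.card (Multiset.map ρ Finset.univ.val) - 1 := by
      rw [hMcard]
    rw [h1, HsAux.prodXC_coeff_sub_one _ (by rw [hMcard]; omega), hMsum]
    ring
  have hEsq : ∀ ρ : Fin n → ℝ, ∑ i, (ρ i) ^ 2 =
      (∑ i, ρ i) ^ 2 - 2 * E ρ ⟨1, by omega⟩ := by
    intro ρ
    have hE1 : 2 * E ρ ⟨1, by omega⟩ =
        (∑ i, ρ i) ^ 2 - ∑ i, (ρ i) ^ 2 := by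
      show 2 * ((-1 : ℝ) ^ ((1 : ℕ) + 1) * (∏ i, (X - C (ρ i))).coeff (n - ((1 : ℕ) + 1))) = _
      rw [← HsAux.prodXC_map_univ]
      have h1 : n - ((1 : ℕ) + 1) = Multiset.card (Multiset.map ρ Finset.univ.val) - 2 := by
        rw [hMcard]
      rw [h1]
      have h2 := HsAux.prodXC_coeff_sub_two (Multiset.map ρ Finset.univ.val)
        (by rw [hMcard]; omega)
      have h3 : (Multiset.map (fun x => x ^ 2) (Multiset.map ρ Finset.univ.val)).sum
          = ∑ i, (ρ i) ^ 2 := by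
        rw [Multiset.map_map, Finset.sum_eq_multiset_sum]
        rfl
      rw [hMsum, h3] at h2
      rw [show ((-1 : ℝ) ^ ((1 : ℕ) + 1)) = 1 by norm_num, one_mul]
      exact h2
    linarith
  -- compactness of K
  have hKclosed : IsClosed K := by
    have hKeq : K = ⋂ (i : Fin n), ⋂ (_ : (i : ℕ) < s), (fun ρ => E ρ i) ⁻¹' {a i} := by
      ext ρ
      simp [hKdef]
    rw [hKeq]
    exact isClosed_iInter fun i => isClosed_iInter fun _ =>
      IsClosed.preimage (hEcont i) isClosed_singleton
  have hKcomp : IsCompact K := by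
    set B2 : ℝ := (a ⟨0, by omega⟩) ^ 2 - 2 * a ⟨1, by omega⟩ with hB2def
    set B : ℝ := Real.sqrt B2 with hBdef
    have hsub : K ⊆ Set.univ.pi (fun _ : Fin n => Set.Icc (-B) B) := by
      intro ρ hρ
      have h0 : ∑ i, ρ i = a ⟨0, by omega⟩ := by
        rw [← hE0 ρ]; exact hρ _ (by simp; omega)
      have h1 : E ρ ⟨1, by omega⟩ = a ⟨1, by omega⟩ := hρ _ (by simp; omega)
      have hsq : ∑ i, (ρ i) ^ 2 = B2 := by rw [hEsq, h0, h1]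
      intro i _
      have hle : (ρ i) ^ 2 ≤ B2 := by
        rw [← hsq]
        exact Finset.single_le_sum (fun j _ => sq_nonneg (ρ j)) (Finset.mem_univ i)
      have habs : |ρ i| ≤ B := by
        rw [← Real.sqrt_sq_eq_abs, hBdef]
        exact Real.sqrt_le_sqrt hle
      exact abs_le.1 habs
    exact IsCompact.of_isClosed_subset (isCompact_univ_pi fun _ => isCompact_Icc)
      hKclosed hsub
  -- main dominating statement
  have main : ∀ z ∈ S, ∃ z' ∈ S,
      (polyOfCoeffs n z').roots.toFinset.card ≤ s ∧ φ z' ≤ φ z := by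
    intro z hz
    obtain ⟨ρ0, hρ0K, hρ0E⟩ := hSK z hz
    set A : Set (Fin n → ℝ) := K ∩ {ρ : Fin n → ℝ | φ (E ρ) ≤ φ z} with hAdef
    have hAcomp : IsCompact A := hKcomp.inter_right (isClosed_le hφcont continuous_const)
    have hAne : A.Nonempty := ⟨ρ0, hρ0K, by simp [hρ0E]⟩
    set F : Fin (n + 1) → (Fin n → ℝ) → ℝ :=
      Fin.cons (fun ρ => φ (E ρ)) (fun j ρ => E ρ j) with hFdef
    have hFcont : ∀ j, Continuous (F j) := by
      intro j
      induction j using Fin.cases with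
      | zero => rw [hFdef]; simpa using hφcont
      | succ i => rw [hFdef]; simpa using hEcont i
    obtain ⟨ρs, hρsA, hlex⟩ := HsAux.exists_lexmin (n + 1) F hFcont A hAcomp hAne
    set M : Multiset ℝ := Multiset.map ρs Finset.univ.val with hMdef
    have hMcardn : Multiset.card M = n := hMcard ρs
    have hprodM : HsAux.prodXC M = ∏ i, (X - C (ρs i)) := HsAux.prodXC_map_univ ρs
    set k : ℕ := M.toFinset.card with hkdef
    have hkn : k ≤ n := le_trans (Multiset.toFinset_card_le M) (le_of_eq hMcardn)
    by_cases hks : k ≤ s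
    · refine ⟨E ρs, hEK _ hρsA.1, ?_, hρsA.2⟩
      rw [hPE, ← hprodM, HsAux.prodXC_roots]
      exact hks
    · exfalso
      push_neg at hks
      have hk1 : 1 ≤ k := by omega
      set D : Multiset ℝ := M.dedup with hDdef
      have hDM : D ≤ M := Multiset.dedup_le M
      have hDcard : Multiset.card D = k := by
        rw [hkdef, hDdef]
        rfl
      obtain ⟨t, htmono, htprod⟩ := HsAux.exists_strictMono_vec D (Multiset.nodup_dedup M) hDcard
      set w : Polynomial ℝ := HsAux.prodXC (M - D) with hwdef
      have hwmonic : w.Monic := HsAux.prodXC_monic _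
      have hwdeg : w.natDegree = n - k := by
        rw [hwdef, HsAux.prodXC_natDegree, Multiset.card_sub hDM, hMcardn, hDcard]
      have hfwr : (∏ i, (X - C (ρs i))) = w * ∏ i : Fin k, (X - C (t i)) := by
        rw [← hprodM, ← htprod, hwdef, ← HsAux.prodXC_add,
          tsub_add_cancel_of_le hDM]
      obtain ⟨ε, hεpos, hεsplits⟩ := HsAux.perturb_splits_aux hk1 t htmono
      set δ : Fin n → ℝ := fun j => (-1 : ℝ) ^ ((j : ℕ) + 1) * w.coeff (n - ((j : ℕ) + 1))
        with hδdef
      have hδlow : ∀ j : Fin n, (j : ℕ) < s → δ j = 0 := by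
        intro j hj
        rw [hδdef]
        have hlt : w.natDegree < n - ((j : ℕ) + 1) := by rw [hwdeg]; omega
        simp only [coeff_eq_zero_of_natDegree_lt hlt, mul_zero]
      have hδk : δ ⟨k - 1, by omega⟩ ≠ 0 := by
        rw [hδdef]
        simp only []
        have h1 : n - ((k - 1 : ℕ) + 1) = w.natDegree := by rw [hwdeg]; omega
        rw [h1, hwmonic.coeff_natDegree]
        simp
      set d : Fin (n + 1) → ℝ := Fin.cons (∑ i, c i * δ i) δ with hddef
      have hdk : d ⟨k, by omega⟩ ≠ 0 := by
        have hsucc : (⟨k, by omega⟩ : Fin (n + 1)) = Fin.succ ⟨k - 1, by omega⟩ := by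
          apply Fin.ext
          simp
          omega
        rw [hsucc, hddef, Fin.cons_succ]
        exact hδk
      set T : Finset (Fin (n + 1)) := Finset.univ.filter (fun j => d j ≠ 0) with hTdef
      have hTne : T.Nonempty := ⟨⟨k, by omega⟩, by simp [hTdef]; exact hdk⟩
      set j0 : Fin (n + 1) := T.min' hTne with hj0def
      have hj0ne : d j0 ≠ 0 := by
        have := T.min'_mem hTne
        simp [hTdef] at this
        exact this
      have hj0min : ∀ j : Fin (n + 1), j < j0 → d j = 0 := by
        intro j hj
        by_contra hne
        have hjT : j ∈ T := by simp [hTdef]; exact hne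
        exact absurd (T.min'_le j hjT) (not_le.2 hj)
      set lam : ℝ := if 0 < d j0 then -(ε / 2) else ε / 2 with hlamdef
      have hlamabs : |lam| < ε := by
        rw [hlamdef]
        split
        · rw [abs_of_nonpos (by linarith)]; linarith
        · rw [abs_of_nonneg (by linarith)]; linarith
      have hlamd : lam * d j0 < 0 := by
        rcases lt_trichotomy (d j0) 0 with h | h | h
        · rw [hlamdef, if_neg (by linarith)]
          nlinarith
        · exact absurd h hj0ne
        · rw [hlamdef, if_pos h]
          nlinarith
      set g : Polynomial ℝ := w * ((∏ i : Fin k, (X - C (t i))) + C lam) with hgdef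
      have hrmonic : (∏ i : Fin k, (X - C (t i))).Monic :=
        monic_prod_of_monic _ _ fun i _ => monic_X_sub_C (t i)
      have hrdeg : (∏ i : Fin k, (X - C (t i))).natDegree = k := by
        rw [natDegree_prod_of_monic _ _ fun i _ => monic_X_sub_C (t i)]
        simp [natDegree_X_sub_C]
      have hCdeglt : (C lam).degree < (∏ i : Fin k, (X - C (t i))).degree := by
        apply lt_of_le_of_lt degree_C_le
        rw [degree_eq_natDegree hrmonic.ne_zero, hrdeg]
        exact_mod_cast Nat.cast_pos.2 (by omega : 0 < k)
      have hrlmonic : ((∏ i : Fin k, (X - C (t i))) + C lam).Monic :=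
        hrmonic.add_of_left hCdeglt
      have hrldeg : ((∏ i : Fin k, (X - C (t i))) + C lam).natDegree = k := by
        have hdeg : ((∏ i : Fin k, (X - C (t i))) + C lam).degree = (k : WithBot ℕ) := by
          rw [degree_add_eq_left_of_degree_lt hCdeglt,
            degree_eq_natDegree hrmonic.ne_zero, hrdeg]
        exact natDegree_eq_of_degree_eq_some hdeg
      have hgmonic : g.Monic := hwmonic.mul hrlmonic
      have hgdeg : g.natDegree = n := by
        rw [hgdef, natDegree_mul hwmonic.ne_zero hrlmonic.ne_zero, hwdeg, hrldeg]
        omega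
      have hgsplits : g.Splits :=
        Splits.mul (HsAux.prodXC_splits _) (hεsplits lam hlamabs)
      have hgeq : g = (∏ i, (X - C (ρs i))) + C lam * w := by
        rw [hgdef, hfwr]
        ring
      obtain ⟨ρl, hρl⟩ := HsAux.exists_rootvec hgmonic hgdeg hgsplits
      have hEρl : ∀ j : Fin n, E ρl j = E ρs j + lam * δ j := by
        intro j
        show (-1 : ℝ) ^ ((j : ℕ) + 1) * (∏ i, (X - C (ρl i))).coeff (n - ((j : ℕ) + 1)) = _
        rw [← hρl, hgeq, coeff_add, coeff_C_mul]
        show _ = (-1 : ℝ) ^ ((j : ℕ) + 1) * (∏ i, (X - C (ρs i))).coeff (n - ((j : ℕ) + 1))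
          + lam * ((-1 : ℝ) ^ ((j : ℕ) + 1) * w.coeff (n - ((j : ℕ) + 1)))
        ring
      have hρlK : ρl ∈ K := by
        intro i hi
        rw [hEρl, hδlow i hi, mul_zero, add_zero]
        exact hρsA.1 i hi
      have hφρl : φ (E ρl) = φ (E ρs) + lam * d 0 := by
        have hd0 : d 0 = ∑ i, c i * δ i := by rw [hddef, Fin.cons_zero]
        rw [hd0, hφdef]
        simp only [hEρl]
        rw [Finset.mul_sum, ← Finset.sum_add_distrib]
        congr 1
        funext i
        ring
      have hFlin : ∀ j : Fin (n + 1), F j ρl = F j ρs + lam * d j := by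
        intro j
        induction j using Fin.cases with
        | zero =>
          rw [hFdef, hddef]
          simp only [Fin.cons_zero]
          exact hφρl
        | succ i =>
          rw [hFdef, hddef]
          simp only [Fin.cons_succ]
          exact hEρl i
      have hφle : φ (E ρl) ≤ φ (E ρs) := by
        rcases eq_or_ne (d 0) 0 with h | h
        · rw [hφρl, h, mul_zero, add_zero]
        · have h0T : (0 : Fin (n + 1)) ∈ T := by simp [hTdef]; exact h
          have hj00 : j0 = 0 := le_antisymm (T.min'_le _ h0T) (Fin.zero_le _)
          rw [hφρl]
          rw [hj00] at hlamd
          linarith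
      have hρlA : ρl ∈ A := ⟨hρlK, le_trans hφle hρsA.2⟩
      apply hlex ρl hρlA
      refine ⟨j0, ?_, ?_⟩
      · intro j' hj'
        rw [hFlin, hj0min j' hj', mul_zero, add_zero]
      · rw [hFlin]
        linarith
  constructor
  · intro z hz
    obtain ⟨z', hz'S, hcard, hle⟩ := main z hz
    exact ⟨z', hz'S, hcard, hle⟩
  · -- sInf equality
    set S2 : Set (Fin n → ℝ) := {z : Fin n → ℝ | ((∀ i : Fin n, (i : ℕ) < s → z i = a i) ∧
        (polyOfCoeffs n z).Splits) ∧
        (polyOfCoeffs n z).roots.toFinset.card ≤ s} with hS2def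
    have hS2sub : S2 ⊆ S := fun z hz => hz.1
    by_cases hSne : S.Nonempty
    · obtain ⟨z1, hz1⟩ := hSne
      have hScomp : IsCompact S := by
        have hSE : S = E '' K := by
          apply Set.Subset.antisymm
          · intro z hz
            obtain ⟨ρ, hρ, hE⟩ := hSK z hz
            exact ⟨ρ, hρ, hE⟩
          · rintro z ⟨ρ, hρ, rfl⟩
            exact hEK ρ hρ
        rw [hSE]
        exact hKcomp.image (continuous_pi hEcont)
      have hbdd1 : BddBelow (φ '' S) := (hScomp.image hφc).bddBelow
      have hbdd2 : BddBelow (φ '' S2) := hbdd1.mono (Set.image_mono (f := φ) hS2sub)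
      have hS2ne : (φ '' S2).Nonempty := by
        obtain ⟨z', hz'S, hcard, _⟩ := main z1 hz1
        exact ⟨φ z', ⟨z', ⟨hz'S, hcard⟩, rfl⟩⟩
      apply le_antisymm
      · exact csInf_le_csInf hbdd1 hS2ne (Set.image_mono (f := φ) hS2sub)
      · refine le_csInf ⟨φ z1, Set.mem_image_of_mem φ hz1⟩ ?_
        rintro v ⟨z, hzS, rfl⟩
        obtain ⟨z', hz'S, hcard, hle⟩ := main z hzS
        exact le_trans (csInf_le hbdd2 ⟨z', ⟨hz'S, hcard⟩, rfl⟩) hle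
    · have hSempty : S = ∅ := Set.not_nonempty_iff_eq_empty.1 hSne
      have hS2empty : S2 = ∅ := Set.eq_empty_of_subset_empty (hSempty ▸ hS2sub)
      rw [hSempty, hS2empty]
end

section
/- Let n ≥ 1, let s satisfy 2 ≤ s ≤ n, and let f ∈ ℝ[t] be any monic hyperbolic polynomial of degree n. Then there exists a monic hyperbolic polynomial g ∈ ℝ[t] of degree n that agrees with f in the coefficients of t^{n−1}, t^{n−2}, …, t^{n−s} and has at most s distinct real roots. Equivalently, every nonempty set H_s(a_1,…,a_s) with s ≥ 2 contains a point z such that f_z has at most s distinct roots. -/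
open Finset

/-- Given `x : Fin n → ℝ` and `2 ≤ s`, there is `y : Fin n → ℝ` taking at most `s`
distinct values with the same power sums `p_1, …, p_s`. -/
theorem exists_few_values (n s : ℕ) (hs2 : 2 ≤ s) (x : Fin n → ℝ) :
    ∃ y : Fin n → ℝ, (∀ j, 1 ≤ j → j ≤ s → ∑ i, y i ^ j = ∑ i, x i ^ j) ∧
      (Finset.univ.image y).card ≤ s := by
  classical
  set K : Set (Fin n → ℝ) :=
    {y | ∀ j, 1 ≤ j → j ≤ s → ∑ i, y i ^ j = ∑ i, x i ^ j} with hK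
  have hcont : ∀ j : ℕ, Continuous fun y : Fin n → ℝ => ∑ i, y i ^ j := fun j =>
    continuous_finset_sum _ fun i _ => (continuous_apply i).pow j
  have hKclosed : IsClosed K := by
    have : K = ⋂ j ∈ Set.Icc 1 s, {y : Fin n → ℝ | ∑ i, y i ^ j = ∑ i, x i ^ j} := by
      ext y
      simp only [hK, Set.mem_setOf_eq, Set.mem_iInter, Set.mem_Icc, and_imp]
    rw [this]
    exact isClosed_biInter fun j _ => isClosed_eq (hcont j) continuous_const
  have hKbdd : Bornology.IsBounded K := by
    refine (Metric.isBounded_closedBall (x := (0 : Fin n → ℝ))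
      (r := Real.sqrt (∑ i, x i ^ 2))).subset ?_
    intro y hy
    have h2 : ∑ i, y i ^ 2 = ∑ i, x i ^ 2 := hy 2 one_le_two hs2
    have hnn : (0:ℝ) ≤ Real.sqrt (∑ i, x i ^ 2) := Real.sqrt_nonneg _
    rw [Metric.mem_closedBall, dist_zero_right]
    rw [pi_norm_le_iff_of_nonneg hnn]
    intro i
    have h1 : y i ^ 2 ≤ ∑ l, y l ^ 2 :=
      Finset.single_le_sum (f := fun l => y l ^ 2) (fun l _ => sq_nonneg _) (mem_univ i)
    rw [h2] at h1
    calc ‖y i‖ = Real.sqrt (y i ^ 2) := by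
          rw [Real.sqrt_sq_eq_abs]; rfl
      _ ≤ Real.sqrt (∑ i, x i ^ 2) := Real.sqrt_le_sqrt h1
  have hKcpt : IsCompact K := Metric.isCompact_of_isClosed_isBounded hKclosed hKbdd
  have hxK : x ∈ K := fun j _ _ => rfl
  obtain ⟨y₀, hy₀K, hmin⟩ := hKcpt.exists_isMinOn ⟨x, hxK⟩
    ((hcont (s+1)).continuousOn)
  refine ⟨y₀, fun j h1 h2 => hy₀K j h1 h2, ?_⟩
  by_contra hcard
  push_neg at hcard
  -- pick s+1 distinct values of y₀
  obtain ⟨T, hTsub, hTcard⟩ := Finset.exists_subset_card_eq hcard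
  have e : Fin (s+1) ≃ {a // a ∈ T} := (finCongr hTcard.symm).trans T.equivFin.symm
  set v : Fin (s+1) → ℝ := fun i => (e i : ℝ) with hv
  have hvinj : Function.Injective v := fun a b hab => by
    have : e a = e b := Subtype.ext hab
    exact e.injective this
  have hvmem : ∀ i, v i ∈ T := fun i => (e i).2
  -- multiplicities
  set m : Fin (s+1) → ℕ := fun i => (univ.filter (fun l => y₀ l = v i)).card with hm
  have hmpos : ∀ i, 0 < m i := by
    intro i
    have : v i ∈ univ.image y₀ := hTsub (hvmem i)
    obtain ⟨l, _, hl⟩ := Finset.mem_image.mp this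
    exact Finset.card_pos.mpr ⟨l, by simp [hm, hl]⟩
  -- the moving map
  set move : (Fin (s+1) → ℝ) → Fin n → ℝ := fun u l =>
    if h : y₀ l ∈ T then u (e.symm ⟨y₀ l, h⟩) else y₀ l with hmove
  have hmove_v : move v = y₀ := by
    funext l
    simp only [hmove]
    split
    · next h => simp [hv]
    · rfl
  -- grouped sum formula
  have hsum : ∀ (u : Fin (s+1) → ℝ) (j : ℕ),
      ∑ l, (move u l) ^ j = (∑ i, (m i : ℝ) * u i ^ j) +
        ∑ l ∈ univ.filter (fun l => y₀ l ∉ T), y₀ l ^ j := by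
    intro u j
    rw [← Finset.sum_filter_add_sum_filter_not univ (fun l => y₀ l ∈ T)]
    congr 1
    · have hbU : univ.filter (fun l => y₀ l ∈ T) =
          Finset.biUnion univ (fun i : Fin (s+1) => univ.filter (fun l => y₀ l = v i)) := by
        ext l
        simp only [Finset.mem_filter, Finset.mem_biUnion, mem_univ, true_and]
        constructor
        · intro h
          exact ⟨e.symm ⟨y₀ l, h⟩, by simp [hv]⟩
        · rintro ⟨i, hi⟩
          rw [hi]; exact hvmem i
      rw [hbU, Finset.sum_biUnion]
      · refine Finset.sum_congr rfl fun i _ => ?_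
        have : ∀ l ∈ univ.filter (fun l => y₀ l = v i), (move u l) ^ j = u i ^ j := by
          intro l hl
          have hyl : y₀ l = v i := (Finset.mem_filter.mp hl).2
          have hmem : y₀ l ∈ T := hyl ▸ hvmem i
          have : e.symm ⟨y₀ l, hmem⟩ = i := by
            apply e.injective
            rw [Equiv.apply_symm_apply]
            exact Subtype.ext hyl
          simp [hmove, hmem, this]
        rw [Finset.sum_congr rfl this, Finset.sum_const, hm, nsmul_eq_mul]
      · intro a _ b _ hab
        simp only [Function.onFun]
        rw [Finset.disjoint_left]
        intro l hl1 hl2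
        simp only [Finset.mem_filter, mem_univ, true_and] at hl1 hl2
        exact hab (hvinj (hl1 ▸ hl2))
    · refine Finset.sum_congr rfl fun l hl => ?_
      have h := (Finset.mem_filter.mp hl).2
      simp [hmove, h]
  -- the map F and its derivative
  set F : (Fin (s+1) → ℝ) → (Fin (s+1) → ℝ) := fun u j => ∑ i, (m i : ℝ) * u i ^ ((j:ℕ)+1)
    with hF
  set C : Fin (s+1) → ℝ := fun j => ∑ l ∈ univ.filter (fun l => y₀ l ∉ T), y₀ l ^ ((j:ℕ)+1)
    with hC
  have hFp : ∀ (u : Fin (s+1) → ℝ) (j : Fin (s+1)),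
      ∑ l, (move u l) ^ ((j:ℕ)+1) = F u j + C j := fun u j => hsum u _
  -- the Jacobian matrix
  set M : Matrix (Fin (s+1)) (Fin (s+1)) ℝ :=
    Matrix.of fun j i => ((((j:ℕ)+1 : ℕ)) : ℝ) * (m i : ℝ) * v i ^ (j:ℕ) with hM
  have hMfact : M = Matrix.diagonal (fun j : Fin (s+1) => ((((j:ℕ)+1 : ℕ)) : ℝ)) *
      ((Matrix.vandermonde v).transpose * Matrix.diagonal (fun i => (m i : ℝ))) := by
    ext j i
    simp [hM, Matrix.mul_diagonal, Matrix.diagonal_mul, Matrix.vandermonde]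
    ring
  have hdet : M.det ≠ 0 := by
    rw [hMfact, Matrix.det_mul, Matrix.det_mul, Matrix.det_diagonal, Matrix.det_diagonal,
      Matrix.det_transpose, Matrix.det_vandermonde]
    apply mul_ne_zero
    · apply Finset.prod_ne_zero_iff.mpr
      intro j _
      positivity
    apply mul_ne_zero
    · apply Finset.prod_ne_zero_iff.mpr
      intro i _
      apply Finset.prod_ne_zero_iff.mpr
      intro j hj
      have hij : i < j := Finset.mem_Ioi.mp hj
      exact sub_ne_zero.mpr fun h => hij.ne' (hvinj h)
    · apply Finset.prod_ne_zero_iff.mpr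
      intro i _
      exact_mod_cast (hmpos i).ne'
  have hMinv : Invertible M := M.invertibleOfIsUnitDet (isUnit_iff_ne_zero.mpr hdet)
  set ceqv : (Fin (s+1) → ℝ) ≃L[ℝ] (Fin (s+1) → ℝ) :=
    (Matrix.toLinearEquiv' M hMinv).toContinuousLinearEquiv with hceqv
  -- derivative of F at v
  have hFderiv : HasFDerivAt F (ceqv : (Fin (s+1) → ℝ) →L[ℝ] (Fin (s+1) → ℝ)) v := by
    rw [hasFDerivAt_pi']
    intro j
    have hcomp : ∀ i : Fin (s+1), HasFDerivAt (fun u : Fin (s+1) → ℝ => (m i : ℝ) * u i ^ ((j:ℕ)+1))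
        ((m i : ℝ) • ((((j:ℕ)+1 : ℕ) : ℝ) * v i ^ (((j:ℕ)+1)-1)) •
          (ContinuousLinearMap.proj i : (Fin (s+1) → ℝ) →L[ℝ] ℝ)) v := by
      intro i
      exact ((hasDerivAt_pow ((j:ℕ)+1) (v i)).comp_hasFDerivAt v
        (ContinuousLinearMap.proj i :
          (Fin (s+1) → ℝ) →L[ℝ] ℝ).hasFDerivAt).const_mul (m i : ℝ)
    have hsum' := HasFDerivAt.fun_sum (fun i (_ : i ∈ univ) => hcomp i)
    convert hsum' using 1
    ext u
    simp only [ContinuousLinearMap.coe_comp', Function.comp_apply,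
      ContinuousLinearMap.proj_apply, ContinuousLinearMap.coe_sum', Finset.sum_apply,
      ContinuousLinearMap.coe_smul', Pi.smul_apply, smul_eq_mul]
    show (ceqv u) j = _
    have : ceqv u = M.mulVec u := rfl
    rw [this]
    simp only [Matrix.mulVec, dotProduct, hM, Matrix.of_apply]
    refine Finset.sum_congr rfl fun i _ => ?_
    simp
    ring
  have hFcd : ContDiff ℝ 1 F := by
    apply contDiff_pi.mpr
    intro j
    exact ContDiff.sum fun i _ => contDiff_const.mul
      (((ContinuousLinearMap.proj i : (Fin (s+1) → ℝ) →L[ℝ] ℝ).contDiff).pow ((j:ℕ)+1))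
  have hstrict : HasStrictFDerivAt F
      (ceqv : (Fin (s+1) → ℝ) →L[ℝ] (Fin (s+1) → ℝ)) v :=
    hFcd.contDiffAt.hasStrictFDerivAt' hFderiv one_ne_zero
  have hmap := hstrict.map_nhds_eq_of_equiv
  have hrange : Set.range F ∈ nhds (F v) := by
    rw [← hmap]; exact Filter.range_mem_map
  obtain ⟨ε, hε, hball⟩ := Metric.mem_nhds_iff.mp hrange
  set q : Fin (s+1) → ℝ := Function.update (F v) (Fin.last s) (F v (Fin.last s) - ε/2) with hq
  have hqball : q ∈ Metric.ball (F v) ε := by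
    rw [Metric.mem_ball, dist_pi_lt_iff hε]
    intro b
    rcases eq_or_ne b (Fin.last s) with hb | hb
    · subst hb
      rw [hq, Function.update_self, Real.dist_eq]
      rw [abs_of_nonpos (by linarith)]
      linarith
    · rw [hq, Function.update_of_ne hb, dist_self]
      exact hε
  obtain ⟨u', hu'⟩ := hball hqball
  set y' : Fin n → ℝ := move u' with hy'
  have hy'K : y' ∈ K := by
    intro j hj1 hjs
    have hjlt : j - 1 < s + 1 := by omega
    set jj : Fin (s+1) := ⟨j-1, hjlt⟩ with hjj'
    have hjj : (jj:ℕ)+1 = j := by simp only [hjj']; omega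
    have hne : jj ≠ Fin.last s := by
      refine Fin.ne_of_val_ne ?_
      simp only [hjj', Fin.val_last]
      omega
    have e1 : ∑ i, y' i ^ j = F u' jj + C jj := by rw [← hjj]; exact hFp u' jj
    have e2 : F u' jj = F v jj := by
      rw [hu', hq, Function.update_of_ne hne]
    have e3 : ∑ i, y₀ i ^ j = F v jj + C jj := by
      rw [← hjj, ← hmove_v]; exact hFp v jj
    rw [e1, e2, ← e3]
    exact hy₀K j hj1 hjs
  have hlt : ∑ i, y' i ^ (s+1) < ∑ i, y₀ i ^ (s+1) := by
    have hlast : ((Fin.last s : Fin (s+1)) : ℕ) + 1 = s + 1 := by simp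
    have e1 : ∑ i, y' i ^ (s+1) = F u' (Fin.last s) + C (Fin.last s) := by
      rw [← hlast]; exact hFp u' (Fin.last s)
    have e2 : F u' (Fin.last s) = F v (Fin.last s) - ε/2 := by
      rw [hu', hq, Function.update_self]
    have e3 : ∑ i, y₀ i ^ (s+1) = F v (Fin.last s) + C (Fin.last s) := by
      rw [← hlast, ← hmove_v]; exact hFp v (Fin.last s)
    rw [e1, e2, e3]
    linarith
  exact absurd (isMinOn_iff.mp hmin y' hy'K) (not_le.mpr hlt)


theorem aeval_psum (n j : ℕ) (z : Fin n → ℝ) :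
    MvPolynomial.aeval z (MvPolynomial.psum (Fin n) ℝ j) = ∑ i, z i ^ j := by
  simp [MvPolynomial.psum, map_sum]

/-- If two tuples have equal power sums `p_1,…,p_s`, they have equal elementary symmetric
functions `e_k` for `k ≤ s`. -/
theorem esymm_eq_of_psum_eq (n s : ℕ) (x y : Fin n → ℝ)
    (hp : ∀ j, 1 ≤ j → j ≤ s → ∑ i, x i ^ j = ∑ i, y i ^ j) :
    ∀ k, k ≤ s → (Multiset.map x Finset.univ.val).esymm k
      = (Multiset.map y Finset.univ.val).esymm k := by
  intro k
  induction k using Nat.strong_induction_on with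
  | _ k ih =>
  intro hks
  rcases Nat.eq_zero_or_pos k with hk0 | hkpos
  · subst hk0
    simp [Multiset.esymm, Multiset.powersetCard_zero_left]
  have hx := congrArg (MvPolynomial.aeval x) (MvPolynomial.mul_esymm_eq_sum (Fin n) ℝ k)
  have hy := congrArg (MvPolynomial.aeval y) (MvPolynomial.mul_esymm_eq_sum (Fin n) ℝ k)
  simp only [map_mul, map_natCast, map_pow, map_neg, map_one, map_sum,
    MvPolynomial.aeval_esymm_eq_multiset_esymm, aeval_psum] at hx hy
  have hrhs : ∑ a ∈ filter (fun a => a.1 < k) (antidiagonal k),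
      (-1:ℝ) ^ a.1 * (Multiset.map x Finset.univ.val).esymm a.1 * ∑ i, x i ^ a.2
      = ∑ a ∈ filter (fun a => a.1 < k) (antidiagonal k),
      (-1:ℝ) ^ a.1 * (Multiset.map y Finset.univ.val).esymm a.1 * ∑ i, y i ^ a.2 := by
    refine Finset.sum_congr rfl fun a ha => ?_
    rw [Finset.mem_filter, Finset.HasAntidiagonal.mem_antidiagonal] at ha
    obtain ⟨hsum, hlt⟩ := ha
    rw [ih a.1 hlt (by omega), hp a.2 (by omega) (by omega)]
  rw [hrhs, ← hy] at hx
  exact mul_left_cancel₀ (Nat.cast_ne_zero.mpr hkpos.ne' : (k:ℝ) ≠ 0) hx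

theorem exists_fn_of_card (n : ℕ) (R : Multiset ℝ) (h : Multiset.card R = n) :
    ∃ x : Fin n → ℝ, Multiset.map x Finset.univ.val = R := by
  obtain ⟨L, rfl⟩ := Quot.exists_rep R
  have hL : L.length = n := h
  subst hL
  refine ⟨L.get, ?_⟩
  have h1 : (Finset.univ : Finset (Fin L.length)).val = ↑(List.finRange L.length) := by
    rw [Fin.univ_def]
  rw [h1]
  show Multiset.map L.get ↑(List.finRange L.length) = _
  rw [Multiset.map_coe, ← List.ofFn_eq_map, List.ofFn_get]
  rfl

/-- For `2 ≤ s ≤ n`, every monic hyperbolic polynomial `f` of degree `n` can be replaced by a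
monic hyperbolic polynomial `g` of degree `n` agreeing with `f` in the coefficients of
`t^{n−1}, …, t^{n−s}` and having at most `s` distinct real roots. (Equivalently, every
nonempty set `H_s(a_1,…,a_s)` with `s ≥ 2` contains a point `z` such that `f_z` has at most
`s` distinct roots.) -/
theorem exists_hyperbolic_few_distinct_roots (n s : ℕ) (hn : 1 ≤ n) (hs2 : 2 ≤ s)
    (hsn : s ≤ n) (f : Polynomial ℝ) (hmonic : f.Monic) (hdeg : f.natDegree = n)
    (hsplit : (f.map (RingHom.id ℝ)).Splits) :
    ∃ g : Polynomial ℝ, g.Monic ∧ g.natDegree = n ∧ (g.map (RingHom.id ℝ)).Splits ∧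
      (∀ i, 1 ≤ i → i ≤ s → g.coeff (n - i) = f.coeff (n - i)) ∧
      g.roots.toFinset.card ≤ s := by
  classical
  have hroots : Multiset.card f.roots = n := by
    have h := Polynomial.Splits.natDegree_eq_card_roots hsplit
    rw [Polynomial.map_id, hdeg] at h
    exact h.symm
  obtain ⟨x, hx⟩ := exists_fn_of_card n f.roots hroots
  have hfeq : f = (Multiset.map (fun a => Polynomial.X - Polynomial.C a) f.roots).prod :=
    by rw [Polynomial.map_id] at hsplit; exact hsplit.eq_prod_roots_of_monic hmonic
  obtain ⟨y, hpy, hycard⟩ := exists_few_values n s hs2 x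
  set My : Multiset ℝ := Multiset.map y Finset.univ.val with hMy
  have hMycard : Multiset.card My = n := by simp [hMy]
  set g : Polynomial ℝ := (Multiset.map (fun a => Polynomial.X - Polynomial.C a) My).prod
    with hg
  have hgmonic : g.Monic :=
    Polynomial.monic_multiset_prod_of_monic _ _ fun a _ => Polynomial.monic_X_sub_C a
  have hgdeg : g.natDegree = n := by
    rw [hg, Polynomial.natDegree_multiset_prod_X_sub_C_eq_card, hMycard]
  have hgroots : g.roots = My := Polynomial.roots_multiset_prod_X_sub_C My
  have hgsplit : (g.map (RingHom.id ℝ)).Splits := by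
    rw [Polynomial.map_id, Polynomial.splits_iff_card_roots, hgroots, hMycard, hgdeg]
  have hesymm := esymm_eq_of_psum_eq n s y x hpy
  refine ⟨g, hgmonic, hgdeg, hgsplit, ?_, ?_⟩
  · intro i hi1 his
    have hin : i ≤ n := le_trans his hsn
    have h1 : g.coeff (n - i) = (-1)^i * My.esymm i := by
      rw [hg, Multiset.prod_X_sub_C_coeff My (by omega : n - i ≤ Multiset.card My)]
      rw [hMycard]
      congr 2 <;> omega
    have h2 : f.coeff (n - i) = (-1)^i * (f.roots).esymm i := by
      conv_lhs => rw [hfeq]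
      rw [Multiset.prod_X_sub_C_coeff f.roots (by omega : n - i ≤ Multiset.card f.roots)]
      rw [hroots]
      congr 2 <;> omega
    rw [h1, h2, ← hx, hMy, hesymm i his]
  · rw [hgroots, hMy, Multiset.toFinset_map, Finset.val_toFinset]
    exact hycard
end
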